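/- Every real symplectic matrix 𝒞 ∈ Sp(d,ℝ) admits a factorization 𝒞 = D_L · V_A · (V_B)ᵀ · V_C, i.e. there exist an invertible real d×d matrix L and real symmetric d×d matrices A, B, C such that 𝒞 equals the product of the block matrices D_L = [[L⁻¹, 0], [0, Lᵀ]], V_A = [[I, 0], [A, I]], (V_B)ᵀ = [[I, B], [0, I]], and V_C = [[I, 0], [C, I]]. -/
import Mathlib

open Matrix Polynomial

theorem symplectic_decomposition
    (d : ℕ) (S : Matrix (Fin d ⊕ Fin d) (Fin d ⊕ Fin d) ℝ)
    (hS : Sᵀ * fromBlocks 0 1 (-1) 0 * S = fromBlocks 0 1 (-1) 0) :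
    ∃ (L A B C : Matrix (Fin d) (Fin d) ℝ),
      IsUnit L ∧ A.IsSymm ∧ B.IsSymm ∧ C.IsSymm ∧
      S = fromBlocks L⁻¹ 0 0 Lᵀ * fromBlocks 1 0 A 1 *
            fromBlocks 1 B 0 1 * fromBlocks 1 0 C 1 := by
  classical
  set J : Matrix (Fin d ⊕ Fin d) (Fin d ⊕ Fin d) ℝ := fromBlocks 0 1 (-1) 0 with hJdef
  have hJJ : J * -J = 1 := by
    simp [hJdef, Matrix.fromBlocks_neg, Matrix.fromBlocks_multiply,
      ← Matrix.fromBlocks_one]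
  have hJJ' : -J * J = 1 := by
    simpa [neg_mul, mul_neg, neg_neg] using hJJ
  -- S is invertible with explicit left inverse
  have hleft : (-J * Sᵀ * J) * S = 1 := by
    calc (-J * Sᵀ * J) * S = -J * (Sᵀ * J * S) := by noncomm_ring
    _ = -J * J := by rw [hS]
    _ = 1 := hJJ'
  have hdetS : IsUnit S.det := Matrix.isUnit_det_of_left_inverse hleft
  have hright : S * (-J * Sᵀ * J) = 1 := mul_eq_one_comm.mpr hleft
  have hS2 : S * J * Sᵀ = J := by
    have h1 : (S * -J * Sᵀ) * J = 1 := by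
      calc (S * -J * Sᵀ) * J = S * (-J * Sᵀ * J) := by noncomm_ring
      _ = 1 := hright
    have h2 : (S * -J * Sᵀ) * (J * -J) = 1 * -J := by
      rw [← Matrix.mul_assoc, h1]
    rw [hJJ, Matrix.mul_one, Matrix.one_mul] at h2
    calc S * J * Sᵀ = -(S * -J * Sᵀ) := by noncomm_ring
    _ = J := by rw [h2, neg_neg]
  -- blocks
  set P := S.toBlocks₁₁ with hP
  set Q := S.toBlocks₁₂ with hQ
  set R := S.toBlocks₂₁ with hR
  set T := S.toBlocks₂₂ with hT
  have hSb : S = fromBlocks P Q R T := (Matrix.fromBlocks_toBlocks S).symm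
  rw [hSb] at hS hS2
  -- block relations from S J Sᵀ = J
  rw [hJdef, Matrix.fromBlocks_transpose, Matrix.fromBlocks_multiply,
    Matrix.fromBlocks_multiply] at hS2
  rw [Matrix.fromBlocks_inj] at hS2
  obtain ⟨e1, e2, e3, e4⟩ := hS2
  simp only [Matrix.mul_zero, Matrix.mul_one, Matrix.mul_neg, Matrix.mul_one,
    zero_add, add_zero, Matrix.neg_mul, Matrix.zero_mul, neg_add_eq_zero] at e1 e2 e3 e4
  rw [hJdef, Matrix.fromBlocks_transpose, Matrix.fromBlocks_multiply,
    Matrix.fromBlocks_multiply] at hS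
  rw [Matrix.fromBlocks_inj] at hS
  obtain ⟨f1, f2, f3, f4⟩ := hS
  simp only [Matrix.mul_zero, Matrix.mul_one, Matrix.mul_neg, Matrix.mul_one,
    zero_add, add_zero, Matrix.neg_mul, Matrix.zero_mul, neg_add_eq_zero] at f1 f2 f3 f4
  -- P * Pᵀ + Q * Qᵀ is invertible
  have hGdet : (P * Pᵀ + Q * Qᵀ).det ≠ 0 := by
    intro h0
    obtain ⟨v, hvne, hv⟩ := (Matrix.exists_mulVec_eq_zero_iff).mpr h0
    have hdot : (v ᵥ* P) ⬝ᵥ (v ᵥ* P) + (v ᵥ* Q) ⬝ᵥ (v ᵥ* Q) = 0 := by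
      have h1 : v ⬝ᵥ ((P * Pᵀ + Q * Qᵀ) *ᵥ v) = 0 := by rw [hv]; simp
      simp only [Matrix.add_mulVec, dotProduct_add, ← Matrix.mulVec_mulVec,
        Matrix.dotProduct_mulVec, Matrix.mulVec_transpose] at h1
      exact h1
    have hPv : v ᵥ* P = 0 := by
      have hn1 : 0 ≤ (v ᵥ* P) ⬝ᵥ (v ᵥ* P) :=
        Finset.sum_nonneg fun i _ => mul_self_nonneg _
      have hn2 : 0 ≤ (v ᵥ* Q) ⬝ᵥ (v ᵥ* Q) :=
        Finset.sum_nonneg fun i _ => mul_self_nonneg _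
      exact dotProduct_self_eq_zero.mp (by linarith [hdot, hn1, hn2])
    have hQv : v ᵥ* Q = 0 := by
      have hn1 : 0 ≤ (v ᵥ* P) ⬝ᵥ (v ᵥ* P) :=
        Finset.sum_nonneg fun i _ => mul_self_nonneg _
      have hn2 : 0 ≤ (v ᵥ* Q) ⬝ᵥ (v ᵥ* Q) :=
        Finset.sum_nonneg fun i _ => mul_self_nonneg _
      exact dotProduct_self_eq_zero.mp (by linarith [hdot, hn1, hn2])
    have hu : Sᵀ *ᵥ (Sum.elim v 0) = 0 := by
      rw [hSb, Matrix.fromBlocks_transpose, Matrix.fromBlocks_mulVec]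
      simp [Matrix.mulVec_transpose, hPv, hQv]
    have hdetST : Sᵀ.det ≠ 0 := by
      rw [Matrix.det_transpose]
      exact hdetS.ne_zero
    apply hdetST
    rw [← Matrix.exists_mulVec_eq_zero_iff]
    refine ⟨Sum.elim v 0, ?_, hu⟩
    intro hcon
    apply hvne
    funext i
    exact congrFun hcon (Sum.inl i)
  -- pass to ℂ : P + I Q is invertible
  set f : ℝ →+* ℂ := algebraMap ℝ ℂ with hfdef
  set P' : Matrix (Fin d) (Fin d) ℂ := P.map f with hP'
  set Q' : Matrix (Fin d) (Fin d) ℂ := Q.map f with hQ'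
  have hPQ' : P' * Q'ᵀ = Q' * P'ᵀ := by
    have h := congrArg (f.mapMatrix) e1
    simpa only [RingHom.mapMatrix_apply, Matrix.map_mul, Matrix.transpose_map] using h.symm
  have hmapG : (P * Pᵀ + Q * Qᵀ).map f = P' * P'ᵀ + Q' * Q'ᵀ := by
    have h := congrArg (f.mapMatrix) (rfl : P * Pᵀ + Q * Qᵀ = P * Pᵀ + Q * Qᵀ)
    simp only [RingHom.mapMatrix_apply] at h
    rw [hP', hQ', ← Matrix.transpose_map, ← Matrix.transpose_map]
    simp [Matrix.map_add, Matrix.map_mul]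
  have hUW : (P' + Complex.I • Q') * (P'ᵀ - Complex.I • Q'ᵀ) = (P * Pᵀ + Q * Qᵀ).map f := by
    rw [hmapG]
    simp only [Matrix.mul_sub, Matrix.add_mul, smul_mul_assoc, mul_smul_comm, smul_smul,
      Complex.I_mul_I, neg_smul, one_smul, sub_neg_eq_add, hPQ']
    match_scalars <;> simp [Complex.I_sq]
  have hdetU : (P' + Complex.I • Q').det ≠ 0 := by
    intro h
    have hc := congrArg Matrix.det hUW
    rw [Matrix.det_mul, h, zero_mul] at hc
    have hdm : (P * Pᵀ + Q * Qᵀ).map f = f.mapMatrix (P * Pᵀ + Q * Qᵀ) := rfl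
    rw [hdm, ← RingHom.map_det] at hc
    apply hGdet
    have h2 := hc.symm
    rwa [hfdef, show (algebraMap ℝ ℂ) (P * Pᵀ + Q * Qᵀ).det
        = ((P * Pᵀ + Q * Qᵀ).det : ℂ) from rfl, Complex.ofReal_eq_zero] at h2
  -- polynomial argument: find real t with P + t Q invertible
  set Mp : Matrix (Fin d) (Fin d) ℝ[X] :=
    P.map Polynomial.C + (X : ℝ[X]) • Q.map Polynomial.C with hMp
  have hpne : Mp.det ≠ 0 := by
    intro h
    apply hdetU
    have hmm : (Polynomial.aeval Complex.I).toRingHom.mapMatrix Mp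
        = P' + Complex.I • Q' := by
      ext i j
      simp only [RingHom.mapMatrix_apply, AlgHom.toRingHom_eq_coe, hMp, hP', hQ',
        Matrix.map_apply, Matrix.add_apply, Matrix.smul_apply, smul_eq_mul,
        _root_.map_mul, _root_.map_add, hfdef, RingHom.coe_coe,
        Polynomial.aeval_C, Polynomial.aeval_X]
    have h2 := (Polynomial.aeval Complex.I).toRingHom.map_det Mp
    rw [hmm, h, map_zero] at h2
    exact h2.symm
  obtain ⟨t, ht⟩ : ∃ t : ℝ, Polynomial.eval t Mp.det ≠ 0 := by
    by_contra hc
    push_neg at hc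
    exact hpne (Polynomial.zero_of_eval_zero _ hc)
  have hKdet : IsUnit (P + t • Q).det := by
    have hmm : (Polynomial.evalRingHom t).mapMatrix Mp = P + t • Q := by
      ext i j
      simp only [RingHom.mapMatrix_apply, hMp, Matrix.map_apply, Matrix.add_apply,
        Matrix.smul_apply, smul_eq_mul, Polynomial.coe_evalRingHom,
        Polynomial.eval_C, Polynomial.eval_X, Polynomial.eval_mul, Polynomial.eval_add, _root_.map_add, _root_.map_mul]
    have h2 := (Polynomial.evalRingHom t).map_det Mp
    rw [hmm] at h2
    rw [isUnit_iff_ne_zero, ← h2]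
    exact ht
  -- the factorization
  set K : Matrix (Fin d) (Fin d) ℝ := P + t • Q with hKdef
  have hK : IsUnit K.det := hKdet
  have hKT : IsUnit Kᵀ.det := by rwa [Matrix.det_transpose]
  -- Q Kᵀ = K Qᵀ
  have hQK : Q * Kᵀ = K * Qᵀ := by
    rw [hKdef, Matrix.transpose_add, Matrix.transpose_smul]
    simp only [Matrix.mul_add, Matrix.add_mul, mul_smul_comm, smul_mul_assoc, e1]
  have hBsymm : Qᵀ * (Kᵀ)⁻¹ = K⁻¹ * Q := by
    have h1 : K⁻¹ * (K * Qᵀ) = Qᵀ := Matrix.nonsing_inv_mul_cancel_left K Qᵀ hK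
    rw [← hQK] at h1
    calc Qᵀ * (Kᵀ)⁻¹ = K⁻¹ * (Q * Kᵀ) * (Kᵀ)⁻¹ := by rw [h1]
      _ = K⁻¹ * Q * (Kᵀ * (Kᵀ)⁻¹) := by
          rw [Matrix.mul_assoc, Matrix.mul_assoc, Matrix.mul_assoc]
      _ = K⁻¹ * Q := by rw [Matrix.mul_nonsing_inv _ hKT, Matrix.mul_one]
  have e3' : T * Pᵀ = 1 + R * Qᵀ := by
    have h : R * Qᵀ = -1 + T * Pᵀ := by
      rw [← e3]; abel
    rw [h]; abel
  have f2' : Pᵀ * T = 1 + Rᵀ * Q := by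
    have h : Rᵀ * Q = -1 + Pᵀ * T := by
      rw [← f2]; abel
    rw [h]; abel
  have f3' : Qᵀ * R = -1 + Tᵀ * P := by
    rw [← f3]; abel
  refine ⟨K⁻¹, Kᵀ * (R + t • T), K⁻¹ * Q, (-t) • 1, ?_, ?_, ?_, ?_, ?_⟩
  · rw [Matrix.isUnit_iff_isUnit_det]
    exact Matrix.isUnit_nonsing_inv_det K hK
  · show (Kᵀ * (R + t • T))ᵀ = Kᵀ * (R + t • T)
    rw [hKdef]
    simp only [Matrix.transpose_mul, Matrix.transpose_add, Matrix.transpose_smul,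
      Matrix.transpose_transpose, Matrix.add_mul, Matrix.mul_add, mul_smul_comm,
      smul_mul_assoc, smul_smul]
    rw [f1, f4, f2', f3']
    module
  · show (K⁻¹ * Q)ᵀ = K⁻¹ * Q
    rw [Matrix.transpose_mul, Matrix.transpose_nonsing_inv]
    exact hBsymm
  · show ((-t) • (1 : Matrix (Fin d) (Fin d) ℝ))ᵀ = (-t) • 1
    rw [Matrix.transpose_smul, Matrix.transpose_one]
  · rw [hSb, Matrix.nonsing_inv_nonsing_inv K hK, Matrix.transpose_nonsing_inv]
    simp only [Matrix.fromBlocks_multiply, Matrix.mul_one, Matrix.mul_zero,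
      Matrix.zero_mul, Matrix.one_mul, add_zero, zero_add]
    rw [Matrix.fromBlocks_inj]
    have hca : Kᵀ⁻¹ * (Kᵀ * (R + t • T)) = R + t • T :=
      Matrix.nonsing_inv_mul_cancel_left _ _ hKT
    have hcl : K * (K⁻¹ * Q) = Q := Matrix.mul_nonsing_inv_cancel_left _ _ hK
    have h22 : (R + t • T) * (K⁻¹ * Q) + Kᵀ⁻¹ = T := by
      rw [← hBsymm]
      have hTK : (R + t • T) * Qᵀ + 1 = T * Kᵀ := by
        rw [hKdef, Matrix.transpose_add, Matrix.transpose_smul]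
        simp only [Matrix.add_mul, Matrix.mul_add, mul_smul_comm, smul_mul_assoc]
        rw [e3']
        module
      calc (R + t • T) * (Qᵀ * Kᵀ⁻¹) + Kᵀ⁻¹
          = ((R + t • T) * Qᵀ + 1) * Kᵀ⁻¹ := by
            rw [Matrix.add_mul ((R + t • T) * Qᵀ) 1 Kᵀ⁻¹, Matrix.one_mul,
              Matrix.mul_assoc]
        _ = T * Kᵀ * Kᵀ⁻¹ := by rw [hTK]
        _ = T := Matrix.mul_nonsing_inv_cancel_right _ _ hKT
    refine ⟨?_, ?_, ?_, ?_⟩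
    · rw [hcl, mul_smul_comm, Matrix.mul_one, hKdef]
      module
    · exact hcl.symm
    · rw [hca, h22, mul_smul_comm, Matrix.mul_one]
      module
    · rw [hca, h22]
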